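/- Suppose φ(1,λ) = 0, and set c = φ′(1,λ), η = 1 − s^k·c², and φ = φ(·,λ). Define the family ψ = (ψ_{n,j}) as follows. If η ≠ 0: ψ_{0,0} = η·φ, ψ_{0,1} = c·φ, ψ_{0,2} = c²·φ, ψ_{−1,0} = 0, ψ_{−1,1} = −s^k·c·φ, ψ_{−1,2} = −φ, and ψ_{n,j} = 0 for all n ∉ {0, −1}. If η = 0: ψ_{0,0} = 0, ψ_{0,1} = φ, ψ_{0,2} = c·φ, and ψ_{n,j} = 0 for all n ≠ 0. Then in either case ψ is a λ-eigenfunction of H_k on the zigzag graph Γ¹ (in particular each component solves −y″ + q·y = λ·y and all Kirchhoff boundary conditions hold); it is supported on finitely many edges. -/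

import Mathlib

open MeasureTheory

noncomputable section

/-- `(y, y′)` is a solution of `−y″ + q·y = λ·y` on `[0,1]`,
in the integral-equation sense. -/
def IsSol (q : ℝ → ℝ) (lam : ℂ) (y y' : ℝ → ℂ) : Prop :=
  (∀ x ∈ Set.Icc (0:ℝ) 1, y x = y 0 + ∫ t in (0:ℝ)..x, y' t) ∧
  (∀ x ∈ Set.Icc (0:ℝ) 1, y' x = y' 0 + ∫ t in (0:ℝ)..x, ((q t : ℂ) - lam) * y t)

/-- A `λ`-eigenfunction of `H_k` on the zigzag graph `Γ¹` (Kirchhoff conditions,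
with `sk = s^k`, `s = e^{2πi/N}`). -/
def IsEigenfun (q : ℝ → ℝ) (lam sk : ℂ) (f f' : ℤ → Fin 3 → ℝ → ℂ) : Prop :=
  (∀ (n : ℤ) (j : Fin 3), IsSol q lam (f n j) (f' n j)) ∧
  ∀ n : ℤ,
    f n 0 1 = f n 1 0 ∧ f n 1 0 = sk * f n 2 1 ∧
    f (n + 1) 0 0 = f n 1 1 ∧ f n 1 1 = f n 2 0 ∧
    -f' n 0 1 + f' n 1 0 - sk * f' n 2 1 = 0 ∧
    f' (n + 1) 0 0 - f' n 1 1 + f' n 2 0 = 0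

lemma isSol_zero (q : ℝ → ℝ) (lam : ℂ) :
    IsSol q lam (fun _ => 0) (fun _ => 0) := by
  constructor <;> intro x hx <;> simp

lemma isSol_smul (q : ℝ → ℝ) (lam : ℂ) (y y' : ℝ → ℂ) (h : IsSol q lam y y') (a : ℂ) :
    IsSol q lam (fun t => a * y t) (fun t => a * y' t) := by
  obtain ⟨h1, h2⟩ := h
  constructor
  · intro x hx
    show a * y x = a * y 0 + ∫ t in (0:ℝ)..x, a * y' t
    rw [intervalIntegral.integral_const_mul, h1 x hx]
    ring
  · intro x hx
    show a * y' x = a * y' 0 + ∫ t in (0:ℝ)..x, ((q t : ℂ) - lam) * (a * y t)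
    have : (∫ t in (0:ℝ)..x, ((q t : ℂ) - lam) * (a * y t))
        = ∫ t in (0:ℝ)..x, a * (((q t : ℂ) - lam) * y t) := by
      congr 1; funext t; ring
    rw [this, intervalIntegral.integral_const_mul, h2 x hx]
    ring

/-- the explicit compactly supported `λ`-eigenfunctions `ψ⁽⁰⁾` of `H_k`
at a Dirichlet eigenvalue `λ` (`φ(1,λ) = 0`), in the two cases `η ≠ 0` and `η = 0`,
where `c = φ′(1,λ)`, `η = 1 − s^k·c²`. -/
theorem compactly_supported_eigenfunction
    (q : ℝ → ℝ) (hq : MemLp q 2 (volume.restrict (Set.Icc (0:ℝ) 1)))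
    (m : ℕ) (hm : 1 ≤ m) (N : ℕ) (hN : N = 2 * m + 1) (k : ℤ)
    (s : ℂ) (hs : s = Complex.exp (2 * (Real.pi : ℂ) * Complex.I / (N : ℂ)))
    (lam : ℂ) (ph ph' : ℝ → ℂ)
    (hph : IsSol q lam ph ph') (hph0 : ph 0 = 0) (hph'0 : ph' 0 = 1)
    (hDir : ph 1 = 0)
    (c eta : ℂ) (hc : c = ph' 1) (heta : eta = 1 - s ^ k * c ^ 2)
    (psiA psiA' psiB psiB' : ℤ → Fin 3 → ℝ → ℂ)
    (hpsiA : psiA = fun n j t =>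
      if n = 0 then (if j = 0 then eta * ph t else if j = 1 then c * ph t else c ^ 2 * ph t)
      else if n = -1 then (if j = 0 then 0 else if j = 1 then -(s ^ k * c) * ph t else -ph t)
      else 0)
    (hpsiA' : psiA' = fun n j t =>
      if n = 0 then (if j = 0 then eta * ph' t else if j = 1 then c * ph' t else c ^ 2 * ph' t)
      else if n = -1 then (if j = 0 then 0 else if j = 1 then -(s ^ k * c) * ph' t else -ph' t)
      else 0)
    (hpsiB : psiB = fun n j t =>
      if n = 0 then (if j = 0 then 0 else if j = 1 then ph t else c * ph t) else 0)
    (hpsiB' : psiB' = fun n j t =>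
      if n = 0 then (if j = 0 then 0 else if j = 1 then ph' t else c * ph' t) else 0) :
    (eta ≠ 0 → IsEigenfun q lam (s ^ k) psiA psiA' ∧
      {p : ℤ × Fin 3 | psiA p.1 p.2 ≠ 0}.Finite) ∧
    (eta = 0 → IsEigenfun q lam (s ^ k) psiB psiB' ∧
      {p : ℤ × Fin 3 | psiB p.1 p.2 ≠ 0}.Finite) := by
  have hph1 : ph' 1 = c := hc.symm
  have h20 : (2 : Fin 3) ≠ 0 := by decide
  have h21 : (2 : Fin 3) ≠ 1 := by decide
  constructor
  · intro _heta
    constructor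
    · constructor
      · intro n j
        by_cases hn0 : n = 0
        · subst hn0
          fin_cases j
          · simp only [hpsiA, hpsiA']; norm_num
            exact isSol_smul q lam ph ph' hph eta
          · simp only [hpsiA, hpsiA']; norm_num
            exact isSol_smul q lam ph ph' hph c
          · simp only [hpsiA, hpsiA', if_neg h20, if_neg h21]; norm_num
            exact isSol_smul q lam ph ph' hph (c ^ 2)
        · by_cases hn1 : n = -1
          · subst hn1
            fin_cases j
            · simp only [hpsiA, hpsiA']; norm_num; exact isSol_zero q lam
            · simp only [hpsiA, hpsiA']; norm_num
              have := isSol_smul q lam ph ph' hph (-(s ^ k * c))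
              simpa [neg_mul] using this
            · simp only [hpsiA, hpsiA', if_neg h20, if_neg h21]; norm_num
              have := isSol_smul q lam ph ph' hph (-1)
              simpa using this
          · simp only [hpsiA, hpsiA', if_neg hn0, if_neg hn1]
            exact isSol_zero q lam
      · intro n
        by_cases hn0 : n = 0
        · subst hn0
          subst heta
          norm_num [hpsiA, hpsiA', hph0, hDir, hph'0, hph1, if_neg h20, if_neg h21]
          all_goals
            first
            | exact ⟨trivial, trivial⟩
            | exact ⟨by ring, by ring⟩
            | (ring_nf; done)
            | ring
        · by_cases hn1 : n = -1
          · subst hn1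
            subst heta
            norm_num [hpsiA, hpsiA', hph0, hDir, hph'0, hph1, if_neg h20, if_neg h21]
            all_goals
              first
              | exact ⟨trivial, trivial⟩
              | exact ⟨by ring, by ring⟩
              | (ring_nf; done)
              | ring
          · by_cases hn2 : n = -2
            · subst hn2
              norm_num [hpsiA, hpsiA', hph0, hDir, hph'0, hph1, if_neg h20, if_neg h21]
            · have hn0' : n + 1 ≠ 0 := by omega
              have hn1' : n + 1 ≠ -1 := by omega
              simp [hpsiA, hpsiA', if_neg hn0, if_neg hn1, if_neg hn0', if_neg hn1']
    · apply Set.Finite.subset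
        (Set.Finite.prod (Set.toFinite ({-1, 0} : Set ℤ)) (Set.toFinite (Set.univ : Set (Fin 3))))
      rintro ⟨n, j⟩ hn
      simp only [Set.mem_setOf_eq] at hn
      refine ⟨?_, Set.mem_univ _⟩
      by_contra hmem
      simp only [Set.mem_insert_iff, Set.mem_singleton_iff] at hmem
      push_neg at hmem
      apply hn
      funext t
      simp [hpsiA, hmem.1, hmem.2]
  · intro heta0
    have hkey : s ^ k * c ^ 2 = 1 := by
      have h := heta0; rw [heta] at h
      linear_combination -h
    constructor
    · constructor
      · intro n j
        by_cases hn0 : n = 0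
        · subst hn0
          fin_cases j
          · simp only [hpsiB, hpsiB']; norm_num; exact isSol_zero q lam
          · simp only [hpsiB, hpsiB']; norm_num
            have := isSol_smul q lam ph ph' hph 1
            simpa using this
          · simp only [hpsiB, hpsiB', if_neg h20, if_neg h21]; norm_num
            exact isSol_smul q lam ph ph' hph c
        · simp only [hpsiB, hpsiB', if_neg hn0]
          exact isSol_zero q lam
      · intro n
        by_cases hn0 : n = 0
        · subst hn0
          norm_num [hpsiB, hpsiB', hph0, hDir, hph'0, hph1, if_neg h20, if_neg h21]
          all_goals
            first
            | exact ⟨trivial, trivial⟩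
            | exact ⟨by linear_combination hkey, by ring⟩
            | exact ⟨by ring, by linear_combination hkey⟩
            | exact ⟨by ring, by ring⟩
            | linear_combination hkey
            | linear_combination -hkey
            | (ring_nf; done)
            | ring
        · by_cases hn1 : n = -1
          · subst hn1
            norm_num [hpsiB, hpsiB', hph0, hDir, hph'0, hph1, if_neg h20, if_neg h21]
          · have hn0' : n + 1 ≠ 0 := by omega
            simp [hpsiB, hpsiB', if_neg hn0, if_neg hn0']
    · apply Set.Finite.subset
        (Set.Finite.prod (Set.toFinite ({0} : Set ℤ)) (Set.toFinite (Set.univ : Set (Fin 3))))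
      rintro ⟨n, j⟩ hn
      simp only [Set.mem_setOf_eq] at hn
      refine ⟨?_, Set.mem_univ _⟩
      by_contra hmem
      simp only [Set.mem_singleton_iff] at hmem
      apply hn
      funext t
      simp [hpsiB, hmem]
  
end
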